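/- Suppose p(·) = Σ_{k=1}^M a_k p(·|z_k) on {1,...,N-1}, with p(·|z_k) supported on X_k, and let S_1 = X_1 ∩ (∪_{k≥2} X_k) be nonempty with I_1 = {k ≥ 2 : X_k ∩ X_1 ≠ ∅}. Then the tilted distribution satisfies p^{z_1,w}(x) ∝ p(x|z_1) for x ∈ X_1\S_1, p^{z_1,w}(x) ∝ (a_1 p(x|z_1)/(Σ_{k∈I_1∪{1}} a_k p(x|z_k)))^w · p(x|z_1) for x ∈ S_1, and p^{z_1,w}(x) = 0 otherwise. Consequently, as w → ∞, p^{z_1,w} converges pointwise to the restriction (normalized) of p(·|z_1) to X_1\S_1. -/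

import Mathlib

open Real Finset Filter
open scoped Classical

/-- 1D overlapping-support case.  With `X_k = supp p(·|z_k)`,
`S_1 = X_1 ∩ ⋃_{k≥2} X_k ≠ ∅` and `I_1 = {k ≥ 2 : X_k ∩ X_1 ≠ ∅}`, the tilted
distribution is proportional to `p(·|z_1)` on `X_1 \ S_1`, to
`(a_1 p(x|z_1) / Σ_{k ∈ I_1∪{1}} a_k p(x|z_k))^w p(x|z_1)` on `S_1`, and vanishes
elsewhere; as `w → ∞` it converges pointwise to the normalized restriction of
`p(·|z_1)` to `X_1 \ S_1`. -/
theorem tilted_overlap_1d {α : Type*} [Fintype α] [DecidableEq α]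
    (M : ℕ)
    (a : Fin (M + 1) → ℝ) (ha0 : ∀ k, 0 < a k) (ha1 : ∑ k, a k = 1)
    (P : Fin (M + 1) → α → ℝ)
    (hP0 : ∀ k x, 0 ≤ P k x) (hP1 : ∀ k, ∑ x, P k x = 1)
    (X : Fin (M + 1) → Set α) (hX : ∀ k, X k = Function.support (P k))
    (S1 : Set α) (hS1 : S1 = X 0 ∩ ⋃ k ∈ {k : Fin (M + 1) | k ≠ 0}, X k)
    (hS1ne : S1.Nonempty) (hrestne : (X 0 \ S1).Nonempty)
    (p : α → ℝ) (hp : ∀ x, p x = ∑ k, a k * P k x)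
    (Z : ℝ → ℝ) (hZ : ∀ w, Z w = ∑ x, p x ^ (-w) * P 0 x ^ (1 + w))
    (tilt : ℝ → α → ℝ)
    (htilt : ∀ w x, tilt w x = p x ^ (-w) * P 0 x ^ (1 + w) / Z w) :
    (∀ w : ℝ, 0 ≤ w → ∃ C : ℝ, 0 < C ∧
      (∀ x ∈ X 0 \ S1, tilt w x = C * P 0 x) ∧
      (∀ x ∈ S1, tilt w x =
        C * (a 0 * P 0 x /
          ∑ k ∈ Finset.univ.filter (fun k => k = 0 ∨ (X k ∩ X 0).Nonempty), a k * P k x) ^ w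
          * P 0 x) ∧
      (∀ x ∉ X 0, tilt w x = 0)) ∧
    (∀ x, Tendsto (fun w => tilt w x) atTop
      (nhds (if x ∈ X 0 \ S1 then
        P 0 x / ∑ y ∈ Finset.univ.filter (fun y => y ∈ X 0 \ S1), P 0 y
      else 0))) := by
  -- basic membership facts
  have hmem : ∀ k x, x ∈ X k ↔ P k x ≠ 0 := by
    intro k x; rw [hX k]; exact Iff.rfl
  have hmemP : ∀ k x, x ∈ X k → 0 < P k x := fun k x hx =>
    (hP0 k x).lt_of_ne (Ne.symm ((hmem k x).1 hx))
  have hnot : ∀ k x, x ∉ X k → P k x = 0 := by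
    intro k x hx; by_contra h; exact hx ((hmem k x).2 h)
  have hSiff : ∀ x, x ∈ S1 ↔ x ∈ X 0 ∧ ∃ k, k ≠ 0 ∧ x ∈ X k := by
    intro x; rw [hS1]; simp [Set.mem_iUnion]
  set D : α → ℝ :=
    fun x => ∑ k ∈ Finset.univ.filter (fun k => k = 0 ∨ (X k ∩ X 0).Nonempty), a k * P k x
    with hD
  -- p on X0 \ S1
  have hpA : ∀ x ∈ X 0 \ S1, p x = a 0 * P 0 x := by
    intro x hx
    rw [hp x]
    refine Finset.sum_eq_single 0 ?_ (by simp)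
    intro k _ hk
    have hxk : x ∉ X k := by
      intro hxk
      exact hx.2 ((hSiff x).2 ⟨hx.1, k, hk, hxk⟩)
    rw [hnot k x hxk, mul_zero]
  -- p on S1 equals D
  have hpB : ∀ x ∈ S1, p x = D x := by
    intro x hx
    have hx0 : x ∈ X 0 := ((hSiff x).1 hx).1
    rw [hp x, hD]
    refine (Finset.sum_subset (Finset.filter_subset _ _) ?_).symm
    intro k _ hk
    simp only [Finset.mem_filter, Finset.mem_univ, true_and, not_or] at hk
    have hxk : x ∉ X k := fun hxk => hk.2 ⟨x, hxk, hx0⟩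
    rw [hnot k x hxk, mul_zero]
  have hpnn : ∀ x, 0 ≤ p x := by
    intro x; rw [hp x]
    exact Finset.sum_nonneg fun k _ => mul_nonneg (ha0 k).le (hP0 k x)
  -- on S1 : a0 P0 x < p x
  have hlt : ∀ x ∈ S1, a 0 * P 0 x < p x := by
    intro x hx
    obtain ⟨hx0, j, hj0, hxj⟩ := (hSiff x).1 hx
    have hpair : a 0 * P 0 x + a j * P j x
        = ∑ k ∈ ({0, j} : Finset (Fin (M + 1))), a k * P k x :=
      (Finset.sum_pair (f := fun k => a k * P k x) (Ne.symm hj0)).symm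
    have h1 : a 0 * P 0 x + a j * P j x ≤ p x := by
      rw [hp x, hpair]
      exact Finset.sum_le_sum_of_subset_of_nonneg (Finset.subset_univ _)
        (fun k _ _ => mul_nonneg (ha0 k).le (hP0 k x))
    have h2 : 0 < a j * P j x := mul_pos (ha0 j) (hmemP j x hxj)
    linarith
  have hS1pos : ∀ x ∈ S1, 0 < P 0 x := fun x hx => hmemP 0 x ((hSiff x).1 hx).1
  have hS1p : ∀ x ∈ S1, 0 < p x := by
    intro x hx
    exact lt_trans (mul_pos (ha0 0) (hS1pos x hx)) (hlt x hx)
  -- Z is positive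
  obtain ⟨x₀, hx₀⟩ := hrestne
  have hx₀P : 0 < P 0 x₀ := hmemP 0 x₀ hx₀.1
  have hx₀p : 0 < p x₀ := by rw [hpA x₀ hx₀]; exact mul_pos (ha0 0) hx₀P
  have hZpos : ∀ w : ℝ, 0 < Z w := by
    intro w
    rw [hZ w]
    refine Finset.sum_pos' (fun x _ => mul_nonneg (Real.rpow_nonneg (hpnn x) _)
      (Real.rpow_nonneg (hP0 0 x) _)) ⟨x₀, Finset.mem_univ x₀, ?_⟩
    exact mul_pos (Real.rpow_pos_of_pos hx₀p _) (Real.rpow_pos_of_pos hx₀P _)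
  constructor
  · -- Part 1
    intro w hw
    refine ⟨a 0 ^ (-w) / Z w, div_pos (Real.rpow_pos_of_pos (ha0 0) _) (hZpos w), ?_, ?_, ?_⟩
    · intro x hx
      have hPx : 0 < P 0 x := hmemP 0 x hx.1
      rw [htilt, hpA x hx, Real.mul_rpow (ha0 0).le hPx.le,
        Real.rpow_add hPx 1 w, Real.rpow_one]
      have h1 : P 0 x ^ (-w) * (P 0 x * P 0 x ^ w) = P 0 x := by
        rw [show P 0 x ^ (-w) * (P 0 x * P 0 x ^ w) =
          (P 0 x ^ (-w) * P 0 x ^ w) * P 0 x from by ring, ← Real.rpow_add hPx]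
        simp
      field_simp
      rw [mul_assoc, ← Real.rpow_add hPx, neg_add_cancel, Real.rpow_zero, mul_one]
    · intro x hx
      have hPx : 0 < P 0 x := hS1pos x hx
      have hDx : 0 < D x := by rw [← hpB x hx]; exact hS1p x hx
      rw [htilt, hpB x hx,
        Real.div_rpow (mul_nonneg (ha0 0).le hPx.le) hDx.le,
        Real.mul_rpow (ha0 0).le hPx.le,
        Real.rpow_add hPx 1 w, Real.rpow_one,
        Real.rpow_neg hDx.le, Real.rpow_neg (ha0 0).le]
      have hAne : a 0 ^ w ≠ 0 := (Real.rpow_pos_of_pos (ha0 0) w).ne'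
      have hDwne : D x ^ w ≠ 0 := (Real.rpow_pos_of_pos hDx w).ne'
      have hZne : Z w ≠ 0 := (hZpos w).ne'
      field_simp
    · intro x hx
      have h0 : P 0 x = 0 := hnot 0 x hx
      have h1 : (1 : ℝ) + w ≠ 0 := by positivity
      rw [htilt, h0, Real.zero_rpow h1, mul_zero, zero_div]
  · -- Part 2 : convergence
    set f : ℝ → α → ℝ := fun w y => a 0 ^ w * (p y ^ (-w) * P 0 y ^ (1 + w)) with hf
    have hsumf : ∀ w, ∑ y, f w y = a 0 ^ w * Z w := by
      intro w; rw [hZ w, Finset.mul_sum]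
    have htf : ∀ w x, tilt w x = f w x / ∑ y, f w y := by
      intro w x
      rw [hsumf w, hf, htilt]
      exact (mul_div_mul_left _ _ (Real.rpow_pos_of_pos (ha0 0) w).ne').symm
    -- limit of f at each point
    set L : α → ℝ := fun y => if y ∈ X 0 \ S1 then P 0 y else 0 with hL
    have hfl : ∀ y, Tendsto (fun w => f w y) atTop (nhds (L y)) := by
      intro y
      by_cases hy0 : y ∈ X 0
      · by_cases hyS : y ∈ S1
        · -- y ∈ S1 : f w y = r^w * P0 y with 0 < r < 1
          have hPy : 0 < P 0 y := hS1pos y hyS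
          have hDy : 0 < D y := by rw [← hpB y hyS]; exact hS1p y hyS
          set r : ℝ := a 0 * P 0 y / D y with hr
          have hr0 : 0 < r := div_pos (mul_pos (ha0 0) hPy) hDy
          have hr1 : r < 1 := (div_lt_one hDy).2 (by rw [← hpB y hyS]; exact hlt y hyS)
          have heq : ∀ w, f w y = r ^ w * P 0 y := by
            intro w
            rw [hf]
            simp only
            rw [hpB y hyS, hr, Real.div_rpow (mul_nonneg (ha0 0).le hPy.le) hDy.le,
              Real.mul_rpow (ha0 0).le hPy.le, Real.rpow_add hPy 1 w, Real.rpow_one,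
              Real.rpow_neg hDy.le]
            field_simp
          have hLy : L y = 0 := by simp only [hL]; exact if_neg fun h => h.2 hyS
          rw [hLy]
          have := (tendsto_rpow_atTop_of_base_lt_one r (by linarith) hr1).mul_const (P 0 y)
          rw [zero_mul] at this
          exact this.congr fun w => (heq w).symm
        · -- y ∈ X0 \ S1 : f w y = P 0 y constantly
          have hPy : 0 < P 0 y := hmemP 0 y hy0
          have heq : ∀ w, f w y = P 0 y := by
            intro w
            rw [hf]
            simp only
            rw [hpA y ⟨hy0, hyS⟩, Real.mul_rpow (ha0 0).le hPy.le]
            rw [show a 0 ^ w * (a 0 ^ (-w) * P 0 y ^ (-w) * P 0 y ^ (1 + w)) =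
              (a 0 ^ w * a 0 ^ (-w)) * (P 0 y ^ (-w) * P 0 y ^ (1 + w)) from by ring,
              ← Real.rpow_add (ha0 0), ← Real.rpow_add hPy]
            simp
          have hLy : L y = P 0 y := by simp only [hL]; exact if_pos ⟨hy0, hyS⟩
          rw [hLy]
          exact tendsto_const_nhds.congr fun w => (heq w).symm
      · -- y ∉ X 0 : eventually f w y = 0
        have hPy : P 0 y = 0 := hnot 0 y hy0
        have hLy : L y = 0 := by simp only [hL]; exact if_neg fun h => hy0 h.1
        rw [hLy]
        refine Tendsto.congr' ?_ tendsto_const_nhds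
        filter_upwards [eventually_ge_atTop (0 : ℝ)] with w hw
        have h1 : (1 : ℝ) + w ≠ 0 := by positivity
        rw [hf]
        simp [hPy, Real.zero_rpow h1]
    -- limit of the sum
    have hsumlim : Tendsto (fun w => ∑ y, f w y) atTop (nhds (∑ y, L y)) :=
      tendsto_finset_sum _ fun y _ => hfl y
    have hT : ∑ y, L y = ∑ y ∈ Finset.univ.filter (fun y => y ∈ X 0 \ S1), P 0 y := by
      rw [Finset.sum_filter]
    have hTpos : 0 < ∑ y, L y := by
      refine Finset.sum_pos' (fun y _ => ?_) ⟨x₀, Finset.mem_univ x₀, ?_⟩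
      · simp only [hL]; split
        · exact hP0 0 y
        · exact le_refl 0
      · simp only [hL]; rw [if_pos hx₀]; exact hx₀P
    intro x
    have hmain : Tendsto (fun w => tilt w x) atTop (nhds (L x / ∑ y, L y)) := by
      refine Tendsto.congr (fun w => (htf w x).symm) ?_
      exact (hfl x).div hsumlim hTpos.ne'
    rw [hT] at hmain
    by_cases hx : x ∈ X 0 \ S1
    · rw [if_pos hx]
      have : L x = P 0 x := by simp only [hL]; exact if_pos hx
      rwa [this] at hmain
    · rw [if_neg hx]
      have : L x = 0 := by simp only [hL]; exact if_neg hx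
      rw [this, zero_div] at hmain
      exact hmain
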